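/- Let C be the middle-thirds Cantor set, μ its natural measure, π : {1,2}^ℕ → C the coding map with 1 ↦ left, 2 ↦ right, and Γ_n(𝚒) the number of consecutive 2's appearing after position n in 𝚒. Then for every 𝚒 ∈ {1,2}^ℕ, n ∈ ℕ, and x = π(𝚒), μ([x, x + 3^{-n}]) ≤ 2^{-Γ_n(𝚒)} · μ([x - 3^{-n}, x + 3^{-n}]). -/

import Mathlib

open Set MeasureTheory Filter
open scoped ENNReal Topology

/-- The coding map `π : {1,2}^ℕ → C` of the middle-thirds Cantor set, where the
symbol `1` (coded by `0 : Fin 2`) means "left" and the symbol `2` (coded by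
`1 : Fin 2`) means "right". -/
noncomputable def cantorPi (i : ℕ → Fin 2) : ℝ :=
  ∑' k : ℕ, (if i k = 1 then (2:ℝ) else 0) / 3 ^ (k + 1)

namespace CantorAux

lemma summable_aux (i : ℕ → Fin 2) :
    Summable (fun k : ℕ => (if i k = 1 then (2:ℝ) else 0) / 3 ^ (k + 1)) := by
  refine Summable.of_nonneg_of_le (fun k => by positivity) (fun k => ?_)
    (((summable_geometric_of_lt_one (by norm_num) (by norm_num : (1/3:ℝ) < 1)).mul_left (2/3)))
  have h1 : (if i k = 1 then (2:ℝ) else 0) ≤ 2 := by split <;> norm_num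
  have h2 : (2:ℝ) / 3 ^ (k+1) = 2/3 * (1/3)^k := by
    rw [pow_succ]; field_simp; rw [← mul_pow]; norm_num
  calc (if i k = 1 then (2:ℝ) else 0) / 3 ^ (k + 1) ≤ 2 / 3 ^ (k+1) := by gcongr
  _ = 2/3 * (1/3)^k := h2

lemma cantorPi_nonneg (i : ℕ → Fin 2) : 0 ≤ cantorPi i :=
  tsum_nonneg fun k => by positivity

lemma cantorPi_le_one (i : ℕ → Fin 2) : cantorPi i ≤ 1 := by
  have h := Summable.tsum_le_tsum (f := fun k : ℕ => (if i k = 1 then (2:ℝ) else 0) / 3 ^ (k + 1))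
    (g := fun k : ℕ => 2/3 * (1/3:ℝ)^k) (fun k => ?_) (summable_aux i)
    (((summable_geometric_of_lt_one (by norm_num) (by norm_num : (1/3:ℝ) < 1)).mul_left (2/3)))
  · have : ∑' k : ℕ, (2/3) * (1/3:ℝ)^k = 1 := by
      rw [tsum_mul_left, tsum_geometric_of_lt_one (by norm_num) (by norm_num)]
      norm_num
    calc cantorPi i ≤ _ := h
    _ = 1 := this
  · have h1 : (if i k = 1 then (2:ℝ) else 0) ≤ 2 := by split <;> norm_num
    have h2 : (2:ℝ) / 3 ^ (k+1) = 2/3 * (1/3)^k := by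
      rw [pow_succ]; field_simp; rw [← mul_pow]; norm_num
    calc (if i k = 1 then (2:ℝ) else 0) / 3 ^ (k + 1) ≤ 2 / 3 ^ (k+1) := by gcongr
    _ = 2/3 * (1/3)^k := h2

lemma cantorPi_shift (i : ℕ → Fin 2) :
    cantorPi i = (if i 0 = 1 then (2:ℝ) else 0) / 3 + cantorPi (fun k => i (k+1)) / 3 := by
  have h := Summable.tsum_eq_zero_add (summable_aux i)
  rw [cantorPi, h]
  congr 1
  · norm_num
  · rw [cantorPi, ← tsum_div_const]
    exact tsum_congr fun k => by rw [div_div, ← pow_succ]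

/-- If the first symbol is `0` (left), then `3x = π(σ i)`. -/
lemma shift_left {i : ℕ → Fin 2} (h : i 0 = 0) :
    3 * cantorPi i = cantorPi (fun k => i (k+1)) := by
  rw [cantorPi_shift i, h]; norm_num; ring

/-- If the first symbol is `1` (right), then `3x - 2 = π(σ i)`. -/
lemma shift_right {i : ℕ → Fin 2} (h : i 0 = 1) :
    3 * cantorPi i - 2 = cantorPi (fun k => i (k+1)) := by
  rw [cantorPi_shift i, h]; norm_num; ring

variable {μ : Measure ℝ}

lemma meq (hself : μ = (2:ℝ≥0∞)⁻¹ • Measure.map (fun x : ℝ => x / 3) μ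
        + (2:ℝ≥0∞)⁻¹ • Measure.map (fun x : ℝ => x / 3 + 2 / 3) μ)
    (A : Set ℝ) (hA : MeasurableSet A) :
    μ A = 2⁻¹ * μ ((fun x : ℝ => x / 3) ⁻¹' A) + 2⁻¹ * μ ((fun x : ℝ => x / 3 + 2/3) ⁻¹' A) := by
  conv_lhs => rw [hself]
  rw [Measure.add_apply, Measure.smul_apply, Measure.smul_apply,
    Measure.map_apply (by fun_prop) hA, Measure.map_apply (by fun_prop) hA]
  simp [smul_eq_mul]

lemma pre1_Icc (a b : ℝ) : (fun x : ℝ => x / 3) ⁻¹' Icc a b = Icc (3*a) (3*b) := by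
  ext x; simp only [mem_preimage, mem_Icc]
  constructor <;> rintro ⟨h1, h2⟩ <;> constructor <;> linarith

lemma pre2_Icc (a b : ℝ) : (fun x : ℝ => x / 3 + 2/3) ⁻¹' Icc a b = Icc (3*a-2) (3*b-2) := by
  ext x; simp only [mem_preimage, mem_Icc]
  constructor <;> rintro ⟨h1, h2⟩ <;> constructor <;> linarith

lemma pre1_Ioi (a : ℝ) : (fun x : ℝ => x / 3) ⁻¹' Ioi a = Ioi (3*a) := by
  ext x; simp only [mem_preimage, mem_Ioi]
  constructor <;> intro h <;> linarith

lemma pre2_Ioi (a : ℝ) : (fun x : ℝ => x / 3 + 2/3) ⁻¹' Ioi a = Ioi (3*a-2) := by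
  ext x; simp only [mem_preimage, mem_Ioi]
  constructor <;> intro h <;> linarith

lemma pre1_Iio (a : ℝ) : (fun x : ℝ => x / 3) ⁻¹' Iio a = Iio (3*a) := by
  ext x; simp only [mem_preimage, mem_Iio]
  constructor <;> intro h <;> linarith

lemma pre2_Iio (a : ℝ) : (fun x : ℝ => x / 3 + 2/3) ⁻¹' Iio a = Iio (3*a-2) := by
  ext x; simp only [mem_preimage, mem_Iio]
  constructor <;> intro h <;> linarith

lemma pre1_sing (a : ℝ) : (fun x : ℝ => x / 3) ⁻¹' {a} = {3*a} := by
  ext x; simp only [mem_preimage, mem_singleton_iff]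
  constructor <;> intro h <;> linarith

lemma pre2_sing (a : ℝ) : (fun x : ℝ => x / 3 + 2/3) ⁻¹' {a} = {3*a-2} := by
  ext x; simp only [mem_preimage, mem_singleton_iff]
  constructor <;> intro h <;> linarith

lemma half_le {a b c : ℝ≥0∞} (ha : a ≠ ∞) (h : a = 2⁻¹ * b + 2⁻¹ * c) (hc : c ≤ a) : a ≤ b := by
  have htwo : (2⁻¹ : ℝ≥0∞) + 2⁻¹ = 1 := by
    rw [← one_div, ENNReal.add_halves]
  have hx : ∀ x : ℝ≥0∞, 2⁻¹ * x + 2⁻¹ * x = x := fun x => by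
    rw [← add_mul, htwo, one_mul]
  have key : a + a ≤ b + a := by
    calc a + a = (2⁻¹ * b + 2⁻¹ * c) + (2⁻¹ * b + 2⁻¹ * c) := by rw [← h]
    _ = (2⁻¹ * b + 2⁻¹ * b) + (2⁻¹ * c + 2⁻¹ * c) := by ring
    _ = b + c := by rw [hx, hx]
    _ ≤ b + a := by exact add_le_add_right hc b
  exact (ENNReal.add_le_add_iff_right ha).mp key

variable [IsProbabilityMeasure μ]
variable (hself : μ = (2:ℝ≥0∞)⁻¹ • Measure.map (fun x : ℝ => x / 3) μ
        + (2:ℝ≥0∞)⁻¹ • Measure.map (fun x : ℝ => x / 3 + 2 / 3) μ)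

include hself

lemma Ioi_step {c : ℝ} (hc : 1 ≤ c) : μ (Ioi c) ≤ μ (Ioi (3*c)) := by
  have h := meq hself (Ioi c) measurableSet_Ioi
  rw [pre1_Ioi, pre2_Ioi] at h
  exact half_le (measure_ne_top μ _) h (measure_mono (Ioi_subset_Ioi (by linarith)))

lemma Ioi_one : μ (Ioi 1) = 0 := by
  have step2 : ∀ m : ℕ, μ (Ioi 1) ≤ μ (Ioi ((3:ℝ)^m)) := by
    intro m
    induction m with
    | zero => simp
    | succ m ih =>
      refine ih.trans ((Ioi_step hself (one_le_pow₀ (by norm_num))).trans_eq ?_)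
      rw [← pow_succ']
  have hiInter : ⋂ m : ℕ, Ioi ((3:ℝ)^m) = ∅ := by
    ext x
    simp only [mem_iInter, mem_Ioi, mem_empty_iff_false, iff_false, not_forall, not_lt]
    obtain ⟨m, hm⟩ := pow_unbounded_of_one_lt x (by norm_num : (1:ℝ) < 3)
    exact ⟨m, hm.le⟩
  have htend : Tendsto (fun m : ℕ => μ (Ioi ((3:ℝ)^m))) atTop (𝓝 0) := by
    have := tendsto_measure_iInter_atTop (μ := μ) (s := fun m : ℕ => Ioi ((3:ℝ)^m))
      (fun m => measurableSet_Ioi.nullMeasurableSet)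
      (fun a b hab => Ioi_subset_Ioi (by gcongr; norm_num))
      ⟨0, measure_ne_top μ _⟩
    rwa [hiInter, measure_empty] at this
  exact le_antisymm (ge_of_tendsto htend (Eventually.of_forall step2)) (zero_le)

lemma Ici_one : μ (Ici 1) = 0 := by
  have hsing : μ {(1:ℝ)} = 0 := by
    have h := meq hself {(1:ℝ)} (measurableSet_singleton 1)
    rw [pre1_sing, pre2_sing] at h
    norm_num at h
    have h3 : μ {(3:ℝ)} ≤ μ (Ioi 1) := measure_mono (by norm_num)
    have h4 := half_le (measure_ne_top μ _) h le_rfl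
    exact le_antisymm (h4.trans (h3.trans_eq (Ioi_one hself))) (zero_le)
  have : Ici (1:ℝ) ⊆ {(1:ℝ)} ∪ Ioi 1 := by
    intro x hx
    rcases eq_or_lt_of_le (mem_Ici.mp hx) with h | h
    · exact Or.inl (by simp [← h])
    · exact Or.inr h
  refine le_antisymm ((measure_mono this).trans ((measure_union_le _ _).trans ?_)) (zero_le)
  rw [hsing, Ioi_one hself]; simp

lemma Iio_step {c : ℝ} (hc : c ≤ 0) : μ (Iio c) ≤ μ (Iio (3*c-2)) := by
  have h := meq hself (Iio c) measurableSet_Iio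
  rw [pre1_Iio, pre2_Iio, add_comm] at h
  exact half_le (measure_ne_top μ _) h (measure_mono (Iio_subset_Iio (by linarith)))

lemma Iio_zero : μ (Iio 0) = 0 := by
  have step2 : ∀ m : ℕ, μ (Iio 0) ≤ μ (Iio (1 - (3:ℝ)^m)) := by
    intro m
    induction m with
    | zero => simp
    | succ m ih =>
      have h1 : (1:ℝ) - 3^m ≤ 0 := by
        have : (1:ℝ) ≤ 3^m := one_le_pow₀ (by norm_num)
        linarith
      refine ih.trans ((Iio_step hself h1).trans_eq ?_)
      congr 1
      rw [pow_succ]; ring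
  have hiInter : ⋂ m : ℕ, Iio (1 - (3:ℝ)^m) = ∅ := by
    ext x
    simp only [mem_iInter, mem_Iio, mem_empty_iff_false, iff_false, not_forall, not_lt]
    obtain ⟨m, hm⟩ := pow_unbounded_of_one_lt (1 - x) (by norm_num : (1:ℝ) < 3)
    exact ⟨m, by linarith⟩
  have htend : Tendsto (fun m : ℕ => μ (Iio (1 - (3:ℝ)^m))) atTop (𝓝 0) := by
    have := tendsto_measure_iInter_atTop (μ := μ) (s := fun m : ℕ => Iio (1 - (3:ℝ)^m))
      (fun m => measurableSet_Iio.nullMeasurableSet)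
      (fun a b hab => Iio_subset_Iio (by gcongr <;> norm_num))
      ⟨0, measure_ne_top μ _⟩
    rwa [hiInter, measure_empty] at this
  exact le_antisymm (ge_of_tendsto htend (Eventually.of_forall step2)) (zero_le)

lemma Iic_zero : μ (Iic 0) = 0 := by
  have hsing : μ {(0:ℝ)} = 0 := by
    have h := meq hself {(0:ℝ)} (measurableSet_singleton 0)
    rw [pre1_sing, pre2_sing, add_comm] at h
    norm_num at h
    have h3 : μ {(-2:ℝ)} ≤ μ (Iio 0) := measure_mono (by norm_num)
    have h4 := half_le (measure_ne_top μ _) h le_rfl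
    exact le_antisymm (h4.trans (h3.trans_eq (Iio_zero hself))) (zero_le)
  have hsub : Iic (0:ℝ) ⊆ {(0:ℝ)} ∪ Iio 0 := by
    intro x hx
    rcases eq_or_lt_of_le (mem_Iic.mp hx) with h | h
    · exact Or.inl (by simp [h])
    · exact Or.inr h
  refine le_antisymm ((measure_mono hsub).trans ((measure_union_le _ _).trans ?_)) (zero_le)
  rw [hsing, Iio_zero hself]; simp

omit [IsProbabilityMeasure μ] hself in
lemma fin2_cases (v : Fin 2) : v = 0 ∨ v = 1 := by
  revert v; decide

lemma upper : ∀ n : ℕ, ∀ (i : ℕ → Fin 2) (k : ℕ), (∀ j < k, i (n + j) = 1) →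
    μ (Icc (cantorPi i) (cantorPi i + (3:ℝ)⁻¹ ^ n)) ≤ (2:ℝ≥0∞)⁻¹ ^ (n + k) := by
  intro n
  induction n with
  | zero =>
    intro i k
    induction k generalizing i with
    | zero => intro _; simpa using prob_le_one (μ := μ)
    | succ k ihk =>
      intro hrun
      have hi0 : i 0 = 1 := by simpa using hrun 0 (Nat.succ_pos k)
      set x := cantorPi i with hx
      set y := cantorPi (fun k => i (k+1)) with hy
      have hxy : 3*x - 2 = y := shift_right hi0
      have hy0 : 0 ≤ y := cantorPi_nonneg _
      have hy1 : y ≤ 1 := cantorPi_le_one _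
      have h := meq hself (Icc x (x + (3:ℝ)⁻¹ ^ 0)) measurableSet_Icc
      rw [pre1_Icc, pre2_Icc] at h
      simp only [pow_zero] at h ⊢
      have e1 : μ (Icc (3*x) (3*(x+1))) = 0 := by
        refine le_antisymm ((measure_mono ?_).trans_eq (Ioi_one hself)) (zero_le)
        intro z hz
        have h1 := hz.1
        simp only [mem_Ioi]; linarith
      have e2 : μ (Icc (3*x-2) (3*(x+1)-2)) ≤ μ (Icc y (y+1)) := by
        have hsub : Icc (3*x-2) (3*(x+1)-2) ⊆ Icc y (y+1) ∪ Ioi 1 := by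
          intro z hz
          rcases le_or_gt z (y+1) with hle | hgt
          · exact Or.inl ⟨by linarith [hz.1], hle⟩
          · exact Or.inr (by simp only [mem_Ioi]; linarith)
        calc μ (Icc (3*x-2) (3*(x+1)-2)) ≤ μ (Icc y (y+1)) + μ (Ioi 1) :=
              (measure_mono hsub).trans (measure_union_le _ _)
        _ = μ (Icc y (y+1)) := by rw [Ioi_one hself, add_zero]
      have e3 : μ (Icc y (y+1)) ≤ 2⁻¹ ^ k := by
        have hr : ∀ j < k, (fun k => i (k+1)) (0 + j) = 1 := by
          intro j hj
          have := hrun (j+1) (by omega)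
          simpa using this
        simpa using ihk (fun k => i (k+1)) hr
      rw [h, e1, mul_zero, zero_add]
      calc 2⁻¹ * μ (Icc (3*x-2) (3*(x+1)-2)) ≤ 2⁻¹ * 2⁻¹ ^ k := by
            exact mul_le_mul_right (e2.trans e3) _
      _ = 2⁻¹ ^ (0 + (k+1)) := by rw [← pow_succ']; congr 1; omega
  | succ n ihn =>
    intro i k hrun
    set x := cantorPi i with hx
    set y := cantorPi (fun k => i (k+1)) with hy
    have hy0 : 0 ≤ y := cantorPi_nonneg _
    have hy1 : y ≤ 1 := cantorPi_le_one _
    have ht1 : (3:ℝ)⁻¹ ^ n ≤ 1 := pow_le_one₀ (by norm_num) (by norm_num)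
    have ht0 : (0:ℝ) ≤ 3⁻¹ ^ n := by positivity
    have h := meq hself (Icc x (x + (3:ℝ)⁻¹ ^ (n+1))) measurableSet_Icc
    rw [pre1_Icc, pre2_Icc] at h
    have eend : 3*(x + (3:ℝ)⁻¹ ^ (n+1)) = 3*x + 3⁻¹ ^ n := by rw [pow_succ]; ring
    rw [eend] at h
    have hr : ∀ j < k, (fun k => i (k+1)) (n + j) = 1 := by
      intro j hj
      show i (n + j + 1) = 1
      have e : n + j + 1 = (n+1) + j := by omega
      rw [e]; exact hrun j hj
    have ih := ihn (fun k => i (k+1)) k hr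
    rw [← hy] at ih
    rcases fin2_cases (i 0) with h0 | h0
    · -- left: 3x = y, second term is in Iic 0
      have hxy : 3*x = y := shift_left h0
      have e2 : μ (Icc (3*x-2) (3*x + 3⁻¹ ^ n - 2)) = 0 := by
        refine le_antisymm ((measure_mono ?_).trans_eq (Iic_zero hself)) (zero_le)
        intro z hz
        have h2 := hz.2
        simp only [mem_Iic]; linarith
      rw [h, e2, mul_zero, add_zero, hxy]
      calc 2⁻¹ * μ (Icc y (y + 3⁻¹ ^ n)) ≤ 2⁻¹ * 2⁻¹ ^ (n + k) := mul_le_mul_right ih _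
      _ = 2⁻¹ ^ (n + 1 + k) := by rw [← pow_succ']; congr 1; omega
    · -- right: 3x - 2 = y, first term is in Ioi 1
      have hxy : 3*x - 2 = y := shift_right h0
      have e1 : μ (Icc (3*x) (3*x + 3⁻¹ ^ n)) = 0 := by
        refine le_antisymm ((measure_mono ?_).trans_eq (Ioi_one hself)) (zero_le)
        intro z hz
        have h1 := hz.1
        simp only [mem_Ioi]; linarith
      have e2 : Icc (3*x-2) (3*x + 3⁻¹ ^ n - 2) = Icc y (y + 3⁻¹ ^ n) := by
        rw [← hxy]; congr 1; ring
      rw [h, e1, mul_zero, zero_add, e2]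
      calc 2⁻¹ * μ (Icc y (y + 3⁻¹ ^ n)) ≤ 2⁻¹ * 2⁻¹ ^ (n + k) := mul_le_mul_right ih _
      _ = 2⁻¹ ^ (n + 1 + k) := by rw [← pow_succ']; congr 1; omega

lemma lower : ∀ n : ℕ, ∀ i : ℕ → Fin 2,
    (2:ℝ≥0∞)⁻¹ ^ n ≤ μ (Icc (cantorPi i - (3:ℝ)⁻¹ ^ n) (cantorPi i + (3:ℝ)⁻¹ ^ n)) := by
  intro n
  induction n with
  | zero =>
    intro i
    set x := cantorPi i with hx
    have hx0 : 0 ≤ x := cantorPi_nonneg _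
    have hx1 : x ≤ 1 := cantorPi_le_one _
    simp only [pow_zero]
    have hcover : (univ : Set ℝ) ⊆ Iio 0 ∪ (Icc (x-1) (x+1) ∪ Ioi 1) := by
      intro z _
      rcases lt_or_ge z 0 with h | h
      · exact Or.inl h
      rcases le_or_gt z 1 with h' | h'
      · exact Or.inr (Or.inl ⟨by linarith, by linarith⟩)
      · exact Or.inr (Or.inr h')
    calc (1:ℝ≥0∞) = μ univ := measure_univ.symm
    _ ≤ μ (Iio 0) + (μ (Icc (x-1) (x+1)) + μ (Ioi 1)) := by
        refine (measure_mono hcover).trans ((measure_union_le _ _).trans ?_)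
        exact add_le_add_right (measure_union_le _ _) _
    _ = μ (Icc (x-1) (x+1)) := by rw [Iio_zero hself, Ioi_one hself, zero_add, add_zero]
  | succ n ihn =>
    intro i
    set x := cantorPi i with hx
    set y := cantorPi (fun k => i (k+1)) with hy
    have h := meq hself (Icc (x - (3:ℝ)⁻¹ ^ (n+1)) (x + (3:ℝ)⁻¹ ^ (n+1))) measurableSet_Icc
    rw [pre1_Icc, pre2_Icc] at h
    have ea : 3*(x - (3:ℝ)⁻¹ ^ (n+1)) = 3*x - 3⁻¹ ^ n := by rw [pow_succ]; ring
    have eb : 3*(x + (3:ℝ)⁻¹ ^ (n+1)) = 3*x + 3⁻¹ ^ n := by rw [pow_succ]; ring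
    rw [ea, eb] at h
    have ih := ihn (fun k => i (k+1))
    rw [← hy] at ih
    rcases fin2_cases (i 0) with h0 | h0
    · have hxy : 3*x = y := shift_left h0
      rw [h, hxy]
      calc (2:ℝ≥0∞)⁻¹ ^ (n+1) = 2⁻¹ * 2⁻¹ ^ n := by rw [← pow_succ']
      _ ≤ 2⁻¹ * μ (Icc (y - 3⁻¹ ^ n) (y + 3⁻¹ ^ n)) := mul_le_mul_right ih _
      _ ≤ _ := le_add_right le_rfl
    · have hxy : 3*x - 2 = y := shift_right h0
      have e2 : Icc (3*x - 3⁻¹ ^ n - 2) (3*x + 3⁻¹ ^ n - 2) = Icc (y - 3⁻¹ ^ n) (y + 3⁻¹ ^ n) := by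
        rw [← hxy]; congr 1 <;> ring
      rw [h, e2]
      calc (2:ℝ≥0∞)⁻¹ ^ (n+1) = 2⁻¹ * 2⁻¹ ^ n := by rw [← pow_succ']
      _ ≤ 2⁻¹ * μ (Icc (y - 3⁻¹ ^ n) (y + 3⁻¹ ^ n)) := mul_le_mul_right ih _
      _ ≤ _ := le_add_left le_rfl

end CantorAux

theorem stmt_12 (μ : Measure ℝ) (hprob : IsProbabilityMeasure μ)
    (hself : μ = (2:ℝ≥0∞)⁻¹ • Measure.map (fun x : ℝ => x / 3) μ
        + (2:ℝ≥0∞)⁻¹ • Measure.map (fun x : ℝ => x / 3 + 2 / 3) μ)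
    (i : ℕ → Fin 2) (n k : ℕ) (hrun : ∀ j < k, i (n + j) = 1) :
    μ (Icc (cantorPi i) (cantorPi i + (3:ℝ)⁻¹ ^ n))
      ≤ ((2:ℝ≥0∞)⁻¹) ^ k *
        μ (Icc (cantorPi i - (3:ℝ)⁻¹ ^ n) (cantorPi i + (3:ℝ)⁻¹ ^ n)) := by
  haveI := hprob
  calc μ (Icc (cantorPi i) (cantorPi i + (3:ℝ)⁻¹ ^ n)) ≤ (2:ℝ≥0∞)⁻¹ ^ (n + k) :=
        CantorAux.upper hself n i k hrun
  _ = ((2:ℝ≥0∞)⁻¹) ^ k * (2:ℝ≥0∞)⁻¹ ^ n := by rw [← pow_add]; congr 1; omega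
  _ ≤ ((2:ℝ≥0∞)⁻¹) ^ k *
        μ (Icc (cantorPi i - (3:ℝ)⁻¹ ^ n) (cantorPi i + (3:ℝ)⁻¹ ^ n)) :=
      mul_le_mul_right (CantorAux.lower hself n i) _
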